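/- Let δ > 0 and let M₁, M₂, …, be independent 1-subgaussian real random variables with zero means; set μ̂ₙ = (1/n)·∑_{s=1}^n M_s. If T is a positive integer with T·δ² ≥ e², then ∑_{n=1}^T P(μ̂ₙ + √((2/n)·log((T/n)·(log²(T/n) + 1))) ≥ δ) ≤ 1 + 2·log(Tδ²·(log²(Tδ²) + 1))/δ² + 3/δ² + √(4π·log(Tδ²·(log²(Tδ²) + 1)))/δ². -/

import Mathlib

open MeasureTheory ProbabilityTheory Real
open scoped ENNReal

/-- `Z` is 1-subgaussian: `E[exp(λZ − λE[Z])] ≤ exp(λ²/2)` for all `λ ∈ ℝ`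
(with the integrability of the moment generating function). -/
def IsOneSubgaussian {Ω : Type*} [MeasurableSpace Ω] (μ : Measure Ω) (Z : Ω → ℝ) : Prop :=
  Integrable Z μ ∧ ∀ l : ℝ,
    Integrable (fun ω => Real.exp (l * Z ω - l * (∫ ω', Z ω' ∂μ))) μ ∧
    (∫ ω, Real.exp (l * Z ω - l * (∫ ω', Z ω' ∂μ)) ∂μ) ≤ Real.exp (l ^ 2 / 2)


private lemma Gmono {x y : ℝ} (hx : 0 < x) (hxy : x ≤ y) :
    x * (Real.log x ^ 2 + 1) ≤ y * (Real.log y ^ 2 + 1) := by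
  have h : ∀ z ∈ Set.Ioi (0:ℝ), HasDerivAt (fun w => w * (Real.log w ^ 2 + 1))
      ((Real.log z + 1)^2) z := by
    intro z hz
    have hz0 : z ≠ 0 := ne_of_gt hz
    have h1 : HasDerivAt (fun w => Real.log w ^ 2 + 1) (2 * Real.log z * z⁻¹) z := by
      simpa using (((Real.hasDerivAt_log hz0).pow 2).add_const 1)
    have := (hasDerivAt_id z).mul h1
    convert this using 1
    · rfl
    · rfl
    · rfl
    simp only [id_eq]
    field_simp
    ring
  have hmono : MonotoneOn (fun w => w * (Real.log w ^ 2 + 1)) (Set.Ioi (0:ℝ)) := by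
    have hi : interior (Set.Ioi (0:ℝ)) = Set.Ioi 0 := interior_Ioi
    apply monotoneOn_of_deriv_nonneg (convex_Ioi 0)
    · exact ContinuousOn.mul continuousOn_id (((Real.continuousOn_log.mono (by
        intro z hz; exact ne_of_gt hz)).pow 2).add continuousOn_const)
    · rw [hi]; intro z hz; exact (h z hz).differentiableAt.differentiableWithinAt
    · rw [hi]; intro z hz; rw [(h z hz).deriv]; positivity
  exact hmono hx (lt_of_lt_of_le hx hxy) hxy

private -- ∫_0^c y e^{-a y²} ≤ 1/(2a)
lemma int1 {a c : ℝ} (ha : 0 < a) (hc : 0 ≤ c) :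
    ∫ y in (0:ℝ)..c, y * Real.exp (-a * y ^ 2) ≤ 1 / (2 * a) := by
  have hF : ∀ y ∈ Set.uIcc (0:ℝ) c, HasDerivAt (fun z => -Real.exp (-a * z ^ 2) / (2 * a))
      (y * Real.exp (-a * y ^ 2)) y := by
    intro y _
    have h1 : HasDerivAt (fun z : ℝ => -a * z ^ 2) (-a * (2 * y)) y := by
      simpa using ((hasDerivAt_pow 2 y).const_mul (-a))
    have h2 := (h1.exp).neg.div_const (2 * a)
    convert h2 using 1
    · rfl
    · rfl
    · rfl
    field_simp
  have := intervalIntegral.integral_eq_sub_of_hasDerivAt hF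
    (Continuous.intervalIntegrable (by continuity) 0 c)
  rw [this]
  have h1 : Real.exp (-a * c ^ 2) ≥ 0 := (Real.exp_pos _).le
  have h2 : Real.exp (-a * (0:ℝ) ^ 2) = 1 := by norm_num
  rw [h2]
  have h3 : 0 < 2 * a := by positivity
  rw [div_sub_div_same, div_le_div_iff_of_pos_right h3]
  nlinarith [Real.exp_pos (-a * c ^ 2)]

-- ∫_0^c e^{-a y²} ≤ √(π/a)/2
lemma int2 {a c : ℝ} (ha : 0 < a) (hc : 0 ≤ c) :
    ∫ y in (0:ℝ)..c, Real.exp (-a * y ^ 2) ≤ Real.sqrt (π / a) / 2 := by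
  rw [intervalIntegral.integral_of_le hc]
  calc ∫ y in Set.Ioc (0:ℝ) c, Real.exp (-a * y ^ 2)
      ≤ ∫ y in Set.Ioi (0:ℝ), Real.exp (-a * y ^ 2) := by
        apply setIntegral_mono_set ((integrable_exp_neg_mul_sq ha).integrableOn)
        · exact Filter.Eventually.of_forall (fun y => (Real.exp_pos _).le)
        · exact HasSubset.Subset.eventuallyLE Set.Ioc_subset_Ioi_self
    _ = Real.sqrt (π / a) / 2 := integral_gaussian_Ioi a

private -- substitution: ∫_u^T g = ∫_0^{√T-√u} 2(y+√u) e^{-a y²}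
lemma subst {a u B : ℝ} (ha : 0 < a) (hu : 0 ≤ u) (huB : u ≤ B) :
    ∫ x in u..B, Real.exp (-a * (Real.sqrt x - Real.sqrt u) ^ 2)
      = ∫ y in (0:ℝ)..(Real.sqrt B - Real.sqrt u),
          (2 * (y + Real.sqrt u)) * Real.exp (-a * y ^ 2) := by
  set c := Real.sqrt B - Real.sqrt u with hcdef
  have hc : 0 ≤ c := sub_nonneg.2 (Real.sqrt_le_sqrt huB)
  have hφ : ∀ y ∈ Set.uIcc (0:ℝ) c, HasDerivAt (fun z => (z + Real.sqrt u) ^ 2)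
      (2 * (y + Real.sqrt u)) y := by
    intro y _
    have := ((hasDerivAt_id y).add_const (Real.sqrt u)).fun_pow 2
    simpa [mul_comm] using this
  have hgcont : Continuous (fun x => Real.exp (-a * (Real.sqrt x - Real.sqrt u) ^ 2)) := by
    continuity
  have key := intervalIntegral.integral_comp_smul_deriv hφ
    ((continuous_const.mul (continuous_id.add continuous_const)).continuousOn) hgcont
  have h0 : ((0:ℝ) + Real.sqrt u) ^ 2 = u := by rw [zero_add, Real.sq_sqrt hu]
  have hcB : (c + Real.sqrt u) ^ 2 = B := by
    rw [hcdef, sub_add_cancel, Real.sq_sqrt (le_trans hu huB)]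
  rw [h0, hcB] at key
  rw [← key]
  apply intervalIntegral.integral_congr
  intro y hy
  rw [Set.uIcc_of_le hc] at hy
  have hy0 : 0 ≤ y := hy.1
  simp only [Function.comp_apply, smul_eq_mul]
  rw [Real.sqrt_sq (by positivity : (0:ℝ) ≤ y + Real.sqrt u), add_sub_cancel_right]

private -- ∫_u^B g ≤ 1/a + √u √(π/a)
lemma intbound {a u B : ℝ} (ha : 0 < a) (hu : 0 ≤ u) (huB : u ≤ B) :
    ∫ x in u..B, Real.exp (-a * (Real.sqrt x - Real.sqrt u) ^ 2)
      ≤ 1 / a + Real.sqrt u * Real.sqrt (π / a) := by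
  rw [subst ha hu huB]
  set c := Real.sqrt B - Real.sqrt u with hcdef
  have hc : 0 ≤ c := sub_nonneg.2 (Real.sqrt_le_sqrt huB)
  have hi1 : IntervalIntegrable (fun y => y * Real.exp (-a * y ^ 2)) volume 0 c :=
    Continuous.intervalIntegrable (by continuity) 0 c
  have hi2 : IntervalIntegrable (fun y => Real.exp (-a * y ^ 2)) volume 0 c :=
    Continuous.intervalIntegrable (by continuity) 0 c
  have hsplit : ∫ y in (0:ℝ)..c, (2 * (y + Real.sqrt u)) * Real.exp (-a * y ^ 2)
      = 2 * (∫ y in (0:ℝ)..c, y * Real.exp (-a * y ^ 2))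
        + (2 * Real.sqrt u) * ∫ y in (0:ℝ)..c, Real.exp (-a * y ^ 2) := by
    rw [← intervalIntegral.integral_const_mul, ← intervalIntegral.integral_const_mul,
      ← intervalIntegral.integral_add (hi1.const_mul 2) (hi2.const_mul _)]
    apply intervalIntegral.integral_congr
    intro y _
    ring
  rw [hsplit]
  have h1 := int1 ha hc
  have h2 := int2 ha hc
  have hs : 0 ≤ Real.sqrt u := Real.sqrt_nonneg u
  have h2' := mul_le_mul_of_nonneg_left h2 (by positivity : (0:ℝ) ≤ 2 * Real.sqrt u)
  have h1' := mul_le_mul_of_nonneg_left h1 (by norm_num : (0:ℝ) ≤ 2)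
  have e1 : (2:ℝ) * (1/(2*a)) = 1/a := by field_simp
  have e2 : 2 * Real.sqrt u * (Real.sqrt (π/a)/2) = Real.sqrt u * Real.sqrt (π/a) := by ring
  linarith

lemma sum_bound (T : ℕ) {a u : ℝ} (ha : 0 < a) (hu : 0 < u) :
    ∑ n ∈ Finset.Icc 1 T, (if (n:ℝ) ≤ u then (1:ℝ)
        else Real.exp (-a * (Real.sqrt n - Real.sqrt u) ^ 2))
      ≤ u + 1 + 1 / a + Real.sqrt u * Real.sqrt (π / a) := by
  classical
  set g : ℝ → ℝ := fun x => Real.exp (-a * (Real.sqrt x - Real.sqrt u) ^ 2) with hgdef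
  have hgc : Continuous g :=
    Real.continuous_exp.comp (continuous_const.mul ((Real.continuous_sqrt.sub continuous_const).pow 2))
  have hg0 : ∀ x, 0 ≤ g x := fun x => (Real.exp_pos _).le
  have hg1 : ∀ x, g x ≤ 1 := by
    intro x
    apply Real.exp_le_one_iff.2
    nlinarith [sq_nonneg (Real.sqrt x - Real.sqrt u)]
  have hganti : AntitoneOn g (Set.Ici u) := by
    intro x hx y hy hxy
    simp only [hgdef]
    apply Real.exp_le_exp.2
    have h1 : Real.sqrt u ≤ Real.sqrt x := Real.sqrt_le_sqrt hx
    have h2 : Real.sqrt x ≤ Real.sqrt y := Real.sqrt_le_sqrt hxy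
    have hsq : (Real.sqrt x - Real.sqrt u)^2 ≤ (Real.sqrt y - Real.sqrt u)^2 := by nlinarith
    nlinarith [mul_le_mul_of_nonneg_left hsq ha.le]
  rw [← Finset.sum_filter_add_sum_filter_not (Finset.Icc 1 T) (fun n : ℕ => (n:ℝ) ≤ u)]
  have hfirst : ∑ n ∈ (Finset.Icc 1 T).filter (fun n : ℕ => (n:ℝ) ≤ u),
      (if (n:ℝ) ≤ u then (1:ℝ) else g n) ≤ u := by
    calc ∑ n ∈ (Finset.Icc 1 T).filter (fun n : ℕ => (n:ℝ) ≤ u),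
        (if (n:ℝ) ≤ u then (1:ℝ) else g n)
        ≤ ∑ n ∈ (Finset.Icc 1 T).filter (fun n : ℕ => (n:ℝ) ≤ u), (1:ℝ) := by
          apply Finset.sum_le_sum
          intro n _
          split_ifs
          · exact le_refl 1
          · exact hg1 n
      _ = ((Finset.Icc 1 T).filter (fun n : ℕ => (n:ℝ) ≤ u)).card := by
          rw [Finset.sum_const, nsmul_eq_mul, mul_one]
      _ ≤ (Finset.Icc 1 (Nat.floor u)).card := by
          apply Nat.cast_le.2
          apply Finset.card_le_card
          intro n hn
          simp only [Finset.mem_filter, Finset.mem_Icc] at hn ⊢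
          exact ⟨hn.1.1, Nat.le_floor hn.2⟩
      _ ≤ u := by
          rw [Nat.card_Icc]
          simp only [Nat.add_sub_cancel]
          exact Nat.floor_le hu.le
  have hsecond : ∑ n ∈ (Finset.Icc 1 T).filter (fun n : ℕ => ¬ (n:ℝ) ≤ u),
      (if (n:ℝ) ≤ u then (1:ℝ) else g n)
      ≤ 1 + 1 / a + Real.sqrt u * Real.sqrt (π / a) := by
    set m := Nat.floor u + 1 with hmdef
    have hum : u < m := by
      rw [hmdef]
      push_cast
      exact Nat.lt_floor_add_one u
    have hsub : (Finset.Icc 1 T).filter (fun n : ℕ => ¬ (n:ℝ) ≤ u) ⊆ Finset.Icc m T := by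
      intro n hn
      simp only [Finset.mem_filter, Finset.mem_Icc, not_le] at hn
      refine Finset.mem_Icc.2 ⟨?_, hn.1.2⟩
      have : Nat.floor u < n := (Nat.floor_lt hu.le).2 hn.2
      omega
    have hrw : ∑ n ∈ (Finset.Icc 1 T).filter (fun n : ℕ => ¬ (n:ℝ) ≤ u),
        (if (n:ℝ) ≤ u then (1:ℝ) else g n)
        = ∑ n ∈ (Finset.Icc 1 T).filter (fun n : ℕ => ¬ (n:ℝ) ≤ u), g n := by
      apply Finset.sum_congr rfl
      intro n hn
      simp only [Finset.mem_filter] at hn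
      rw [if_neg hn.2]
    rw [hrw]
    by_cases hmT : m ≤ T
    · calc ∑ n ∈ (Finset.Icc 1 T).filter (fun n : ℕ => ¬ (n:ℝ) ≤ u), g n
          ≤ ∑ n ∈ Finset.Icc m T, g n :=
            Finset.sum_le_sum_of_subset_of_nonneg hsub (fun n _ _ => hg0 n)
        _ = g m + ∑ n ∈ Finset.Icc (m+1) T, g n := by
            rw [← Finset.Ioc_insert_left hmT, Finset.sum_insert (by simp),
              Finset.Icc_add_one_left_eq_Ioc]
        _ ≤ 1 + ∫ x in (m:ℝ)..(T:ℝ), g x := by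
            have hsum : ∑ n ∈ Finset.Icc (m+1) T, g n
                = ∑ i ∈ Finset.Ico m T, g ((i:ℝ) + 1) := by
              apply Finset.sum_nbij' (fun n => n - 1) (fun i => i + 1)
              · intro n hn; simp only [Finset.mem_Icc, Finset.mem_Ico] at hn ⊢; omega
              · intro i hi; simp only [Finset.mem_Icc, Finset.mem_Ico] at hi ⊢; omega
              · intro n hn; simp only [Finset.mem_Icc] at hn; omega
              · intro i _; omega
              · intro n hn
                simp only [Finset.mem_Icc] at hn
                have : ((n - 1 : ℕ) : ℝ) + 1 = (n : ℝ) := by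
                  have : 1 ≤ n := le_trans (Nat.le_add_left 1 m) hn.1
                  push_cast [Nat.cast_sub this]
                  ring
                rw [this]
            rw [hsum]
            gcongr
            · exact hg1 m
            · have := AntitoneOn.sum_le_integral_Ico hmT
                (hganti.mono (fun x hx => le_trans hum.le hx.1))
              convert this using 2 with i
              · rfl
              push_cast
              ring
        _ ≤ 1 + ∫ x in u..(T:ℝ), g x := by
            gcongr
            have huT : u ≤ (T:ℝ) := le_trans hum.le (Nat.cast_le.2 hmT)
            rw [← intervalIntegral.integral_add_adjacent_intervals
              (hgc.intervalIntegrable u (m:ℝ)) (hgc.intervalIntegrable (m:ℝ) (T:ℝ))]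
            have : 0 ≤ ∫ x in u..(m:ℝ), g x :=
              intervalIntegral.integral_nonneg hum.le (fun x _ => hg0 x)
            linarith
        _ ≤ 1 + (1 / a + Real.sqrt u * Real.sqrt (π / a)) := by
            gcongr
            exact intbound ha hu.le (le_trans hum.le (Nat.cast_le.2 hmT))
        _ = 1 + 1 / a + Real.sqrt u * Real.sqrt (π / a) := by ring
    · have hempty : (Finset.Icc 1 T).filter (fun n : ℕ => ¬ (n:ℝ) ≤ u) = ∅ := by
        rw [Finset.eq_empty_iff_forall_notMem]
        intro n hn
        exact absurd (Finset.mem_Icc.1 (hsub hn)) (fun h => hmT (le_trans h.1 h.2))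
      rw [hempty, Finset.sum_empty]
      have : 0 ≤ Real.sqrt u * Real.sqrt (π / a) := by positivity
      have : 0 ≤ 1 / a := by positivity
      linarith [Real.sqrt_nonneg u, Real.sqrt_nonneg (π / a),
        mul_nonneg (Real.sqrt_nonneg u) (Real.sqrt_nonneg (π / a))]
  linarith

private lemma chernoff {Ω : Type*} [MeasurableSpace Ω] (μ : Measure Ω) [IsProbabilityMeasure μ]
    (M : ℕ → Ω → ℝ) (hmeas : ∀ i, Measurable (M i))
    (hindep : iIndepFun M μ)
    (hsub : ∀ i, IsOneSubgaussian μ (M i))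
    (hmean : ∀ i, (∫ ω, M i ω ∂μ) = 0)
    (n : ℕ) (t : ℝ) (ht : 0 ≤ t) :
    (μ {ω | (n : ℝ) * t ≤ ∑ s ∈ Finset.range n, M s ω}).toReal
      ≤ Real.exp (-(n : ℝ) * t ^ 2 / 2) := by
  have hint : ∀ i, Integrable (fun ω => Real.exp (t * M i ω)) μ := by
    intro i
    have := ((hsub i).2 t).1
    simpa [hmean i] using this
  have hintS : Integrable (fun ω => Real.exp (t * (∑ i ∈ Finset.range n, M i) ω)) μ :=
    hindep.integrable_exp_mul_sum hmeas (fun i _ => hint i)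
  have hmgf : mgf (∑ i ∈ Finset.range n, M i) μ t ≤ Real.exp ((n : ℝ) * t ^ 2 / 2) := by
    rw [hindep.mgf_sum hmeas]
    calc ∏ i ∈ Finset.range n, mgf (M i) μ t
        ≤ ∏ i ∈ Finset.range n, Real.exp (t ^ 2 / 2) := by
          apply Finset.prod_le_prod (fun i _ => mgf_nonneg)
          intro i _
          have := ((hsub i).2 t).2
          simp only [hmean i, mul_zero, sub_zero] at this
          exact this
      _ = Real.exp ((n : ℝ) * t ^ 2 / 2) := by
          rw [Finset.prod_const, Finset.card_range, ← Real.exp_nat_mul]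
          ring_nf
  have hset : {ω | (n : ℝ) * t ≤ ∑ s ∈ Finset.range n, M s ω}
      = {ω | (n : ℝ) * t ≤ (∑ s ∈ Finset.range n, M s) ω} := by
    ext ω; simp [Finset.sum_apply]
  rw [hset]
  calc (μ {ω | (n : ℝ) * t ≤ (∑ s ∈ Finset.range n, M s) ω}).toReal
      ≤ Real.exp (-t * ((n : ℝ) * t)) * mgf (∑ s ∈ Finset.range n, M s) μ t :=
        measure_ge_le_exp_mul_mgf _ ht hintS
    _ ≤ Real.exp (-t * ((n : ℝ) * t)) * Real.exp ((n : ℝ) * t ^ 2 / 2) := by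
        gcongr
    _ = Real.exp (-(n : ℝ) * t ^ 2 / 2) := by
        rw [← Real.exp_add]; ring_nf

set_option maxHeartbeats 1000000 in
/-- Let `δ > 0`, `M₁, M₂, …` independent 1-subgaussian with zero means and
`μ̂ₙ = (1/n)·∑_{s=1}^n M_s`.  If `T` is a positive integer with `T·δ² ≥ e²`, then
`∑_{n=1}^T P(μ̂ₙ + √((2/n)·log((T/n)·(log²(T/n) + 1))) ≥ δ)
  ≤ 1 + 2·log(Tδ²·(log²(Tδ²)+1))/δ² + 3/δ² + √(4π·log(Tδ²·(log²(Tδ²)+1)))/δ²`. -/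
theorem stmt3 {Ω : Type*} [MeasurableSpace Ω] (μ : Measure Ω) [IsProbabilityMeasure μ]
    (M : ℕ → Ω → ℝ) (hmeas : ∀ i, Measurable (M i))
    (hindep : iIndepFun M μ)
    (hsub : ∀ i, IsOneSubgaussian μ (M i))
    (hmean : ∀ i, (∫ ω, M i ω ∂μ) = 0)
    (δ : ℝ) (hδ : 0 < δ)
    (T : ℕ) (hT : 0 < T) (hTδ : Real.exp 2 ≤ T * δ ^ 2) :
    (∑ n ∈ Finset.Icc 1 T,
        μ {ω | δ ≤ (∑ s ∈ Finset.range n, M s ω) / n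
            + Real.sqrt ((2 / n) * Real.log (((T : ℝ) / n)
              * (Real.log ((T : ℝ) / n) ^ 2 + 1)))}) ≤
      ENNReal.ofReal (1 + 2 * Real.log (T * δ ^ 2 * (Real.log (T * δ ^ 2) ^ 2 + 1)) / δ ^ 2
        + 3 / δ ^ 2
        + Real.sqrt (4 * Real.pi * Real.log (T * δ ^ 2 * (Real.log (T * δ ^ 2) ^ 2 + 1)))
          / δ ^ 2) := by
  classical
  set v : ℝ := (T : ℝ) * δ ^ 2 with hvdef
  set L : ℝ := Real.log (v * (Real.log v ^ 2 + 1)) with hLdef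
  have hv0 : (0:ℝ) < v := lt_of_lt_of_le (Real.exp_pos 2) hTδ
  have hlogv : (2:ℝ) ≤ Real.log v := by
    rw [show (2:ℝ) = Real.log (Real.exp 2) by rw [Real.log_exp]]
    exact Real.log_le_log (Real.exp_pos 2) hTδ
  have hvarg : v ≤ v * (Real.log v ^ 2 + 1) := by nlinarith [sq_nonneg (Real.log v)]
  have hL2 : (2:ℝ) ≤ L := le_trans hlogv (Real.log_le_log hv0 hvarg)
  have hL0 : (0:ℝ) < L := lt_of_lt_of_le (by norm_num) hL2
  set u : ℝ := 2 * L / δ ^ 2 with hudef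
  have hu0 : (0:ℝ) < u := by positivity
  set a : ℝ := δ ^ 2 / 2 with hadef
  have ha0 : (0:ℝ) < a := by positivity
  clear_value v L u a
  set b : ℕ → ℝ := fun n => if (n:ℝ) ≤ u then (1:ℝ)
      else Real.exp (-a * (Real.sqrt n - Real.sqrt u) ^ 2) with hbdef
  have hb0 : ∀ n, 0 ≤ b n := by
    intro n; simp only [hbdef]; split_ifs
    · norm_num
    · exact (Real.exp_pos _).le
  -- per-term bound
  have hterm : ∀ n ∈ Finset.Icc 1 T,
      μ {ω | δ ≤ (∑ s ∈ Finset.range n, M s ω) / n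
            + Real.sqrt ((2 / n) * Real.log (((T : ℝ) / n)
              * (Real.log ((T : ℝ) / n) ^ 2 + 1)))} ≤ ENNReal.ofReal (b n) := by
    intro n hn
    rw [Finset.mem_Icc] at hn
    have hn1 : (1:ℝ) ≤ (n:ℝ) := by exact_mod_cast hn.1
    have hn0 : (0:ℝ) < (n:ℝ) := lt_of_lt_of_le one_pos hn1
    have hnT : (n:ℝ) ≤ (T:ℝ) := by exact_mod_cast hn.2
    by_cases hcase : (n:ℝ) ≤ u
    · calc μ _ ≤ 1 := prob_le_one
        _ = ENNReal.ofReal (b n) := by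
            simp only [hbdef, if_pos hcase, ENNReal.ofReal_one]
    · push_neg at hcase
      set εn : ℝ := Real.sqrt ((2 / n) * Real.log (((T : ℝ) / n)
          * (Real.log ((T : ℝ) / n) ^ 2 + 1))) with hεdef
      clear_value εn
      have hTn1 : (1:ℝ) ≤ (T:ℝ) / n := (one_le_div hn0).2 hnT
      have hTn0 : (0:ℝ) < (T:ℝ) / n := lt_of_lt_of_le one_pos hTn1
      -- T/n ≤ v
      have hkey : (T:ℝ) / n ≤ v := by
        rw [div_le_iff₀ hn0, hvdef]
        have h4 : (4:ℝ) ≤ 2 * L := by linarith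
        have : (1:ℝ) ≤ (n:ℝ) * δ ^ 2 := by
          have : u < n := hcase
          rw [hudef] at this
          rw [div_lt_iff₀ (by positivity : (0:ℝ) < δ ^ 2)] at this
          linarith
        calc (T:ℝ) = (T:ℝ) * 1 := by ring
          _ ≤ (T:ℝ) * ((n:ℝ) * δ ^ 2) := by
              apply mul_le_mul_of_nonneg_left this (Nat.cast_nonneg T)
          _ = (T:ℝ) * δ ^ 2 * n := by ring
      have hlogn0 : 0 ≤ Real.log (((T : ℝ) / n) * (Real.log ((T : ℝ) / n) ^ 2 + 1)) := by
        apply Real.log_nonneg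
        nlinarith [sq_nonneg (Real.log ((T:ℝ)/n))]
      have hlognL : Real.log (((T : ℝ) / n) * (Real.log ((T : ℝ) / n) ^ 2 + 1)) ≤ L := by
        rw [hLdef]
        apply Real.log_le_log (by positivity)
        exact Gmono hTn0 hkey
      -- εn ≤ δ √u / √n
      have hεle : εn ≤ δ * Real.sqrt u / Real.sqrt n := by
        rw [hεdef]
        have harg : (2 / n) * Real.log (((T : ℝ) / n) * (Real.log ((T : ℝ) / n) ^ 2 + 1))
            ≤ (δ * Real.sqrt u / Real.sqrt n) ^ 2 := by
          have hrhs : (δ * Real.sqrt u / Real.sqrt n) ^ 2 = δ ^ 2 * u / n := by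
            rw [div_pow, mul_pow, Real.sq_sqrt hu0.le, Real.sq_sqrt hn0.le]
          rw [hrhs, hudef]
          rw [div_mul_eq_mul_div, div_le_div_iff₀ hn0 hn0]
          have : δ ^ 2 * (2 * L / δ ^ 2) = 2 * L := by field_simp
          rw [this]
          have := mul_le_mul_of_nonneg_left hlognL (by norm_num : (0:ℝ) ≤ 2)
          nlinarith
        calc Real.sqrt _ ≤ Real.sqrt ((δ * Real.sqrt u / Real.sqrt n) ^ 2) :=
              Real.sqrt_le_sqrt harg
          _ = δ * Real.sqrt u / Real.sqrt n := Real.sqrt_sq (by positivity)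
      have hsqun : Real.sqrt u ≤ Real.sqrt n := Real.sqrt_le_sqrt hcase.le
      have hsn0 : (0:ℝ) < Real.sqrt n := Real.sqrt_pos.2 hn0
      have hεδ : εn ≤ δ := by
        have h2 : δ * Real.sqrt u / Real.sqrt n ≤ δ := by
          rw [div_le_iff₀ hsn0]
          nlinarith [hδ.le, hsqun, Real.sqrt_nonneg u]
        linarith [hεle]
      set t : ℝ := δ - εn with htdef
      clear_value t
      have ht0 : 0 ≤ t := by rw [htdef]; linarith
      -- set equality
      have hset : {ω | δ ≤ (∑ s ∈ Finset.range n, M s ω) / n + εn}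
          = {ω | (n:ℝ) * t ≤ ∑ s ∈ Finset.range n, M s ω} := by
        ext ω
        simp only [Set.mem_setOf_eq, htdef]
        rw [← sub_le_iff_le_add, le_div_iff₀ hn0, mul_comm]
      have hch := chernoff μ M hmeas hindep hsub hmean n t ht0
      -- exp bound
      have hexp : Real.exp (-(n:ℝ) * t ^ 2 / 2) ≤ b n := by
        rw [hbdef]
        simp only [if_neg (not_le.2 hcase)]
        apply Real.exp_le_exp.2
        rw [hadef]
        have ht' : δ * (Real.sqrt n - Real.sqrt u) / Real.sqrt n ≤ t := by
          rw [htdef]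
          have : δ * (Real.sqrt n - Real.sqrt u) / Real.sqrt n
              = δ - δ * Real.sqrt u / Real.sqrt n := by field_simp
          rw [this]
          linarith
        have ht'' : 0 ≤ δ * (Real.sqrt n - Real.sqrt u) / Real.sqrt n :=
          div_nonneg (mul_nonneg hδ.le (by linarith)) hsn0.le
        have hsq : (δ * (Real.sqrt n - Real.sqrt u) / Real.sqrt n) ^ 2 ≤ t ^ 2 := by
          apply sq_le_sq' (by linarith) ht'
        have hexpand : (δ * (Real.sqrt n - Real.sqrt u) / Real.sqrt n) ^ 2
            = δ ^ 2 * (Real.sqrt n - Real.sqrt u) ^ 2 / n := by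
          rw [div_pow, mul_pow, Real.sq_sqrt hn0.le]
        rw [hexpand] at hsq
        rw [div_le_iff₀ hn0] at hsq
        nlinarith
      -- combine
      rw [hset, ← ENNReal.ofReal_toReal (measure_ne_top μ _)]
      exact ENNReal.ofReal_le_ofReal (le_trans hch hexp)
  -- sum up
  refine le_trans (Finset.sum_le_sum hterm) ?_
  rw [← ENNReal.ofReal_sum_of_nonneg (fun n _ => hb0 n)]
  apply ENNReal.ofReal_le_ofReal
  have hsb := sum_bound T ha0 hu0
  have harith : u + 1 + 1 / a + Real.sqrt u * Real.sqrt (π / a)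
      ≤ 1 + 2 * L / δ ^ 2 + 3 / δ ^ 2 + Real.sqrt (4 * π * L) / δ ^ 2 := by
    have h1a : 1 / a = 2 / δ ^ 2 := by rw [hadef]; field_simp
    have hsqrt : Real.sqrt u * Real.sqrt (π / a) = Real.sqrt (4 * π * L) / δ ^ 2 := by
      rw [← Real.sqrt_mul hu0.le]
      have : u * (π / a) = 4 * π * L / (δ ^ 2) ^ 2 := by
        rw [hudef, hadef]; field_simp; ring
      rw [this, Real.sqrt_div (by positivity : (0:ℝ) ≤ 4 * π * L),
        Real.sqrt_sq (by positivity : (0:ℝ) ≤ δ ^ 2)]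
    have h23 : (2:ℝ) / δ ^ 2 ≤ 3 / δ ^ 2 := by gcongr <;> norm_num
    rw [h1a, hsqrt, hudef]
    linarith
  linarith [hsb, harith]
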